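/- Let A be a Dedekind domain and I a fractional ideal of A viewed as a rank-1 projective A-module. Then I contains a primitive element (i.e., an element x with x ∉ 𝔫I for every proper nonzero ideal 𝔫 ⊊ A) if and only if I is a free A-module (i.e., principal). -/

import Mathlib

open nonZeroDivisors

/-- A fractional ideal `I` of a Dedekind domain `A` contains a primitive element
(an `x ∈ I` with `x ∉ 𝔫I` for every proper nonzero ideal `𝔫 ⊊ A`) if and only if
`I` is principal (free of rank one). -/
theorem fractionalIdeal_primitive_iff_principal
    {A K : Type*} [CommRing A] [IsDomain A] [IsDedekindDomain A]
    [Field K] [Algebra A K] [IsFractionRing A K]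
    (I : FractionalIdeal A⁰ K) (hI : I ≠ 0) :
    (∃ x : K, x ∈ I ∧ ∀ 𝔫 : Ideal A, 𝔫 ≠ 0 → 𝔫 ≠ ⊤ →
        x ∉ ((𝔫 : FractionalIdeal A⁰ K) * I)) ↔
      ∃ y : K, I = FractionalIdeal.spanSingleton A⁰ y := by
  constructor
  · rintro ⟨x, hxI, hx⟩
    -- pick a nonzero element w of I (equal to x when x ≠ 0)
    obtain ⟨w, hwI, hw0, hxw⟩ : ∃ w : K, w ∈ I ∧ w ≠ 0 ∧ (x ≠ 0 → w = x) := by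
      by_cases hx0 : x = 0
      · obtain ⟨w, hwI, hw0⟩ : ∃ w ∈ I, w ≠ (0 : K) := by
          by_contra h
          push_neg at h
          exact hI (FractionalIdeal.eq_zero_iff.mpr h)
        exact ⟨w, hwI, hw0, fun h => absurd hx0 h⟩
      · exact ⟨x, hxI, hx0, fun _ => rfl⟩
    have hsw : FractionalIdeal.spanSingleton A⁰ w ≤ I :=
      (FractionalIdeal.spanSingleton_le_iff_mem).mpr hwI
    have hle : FractionalIdeal.spanSingleton A⁰ w * I⁻¹ ≤ 1 := by
      calc FractionalIdeal.spanSingleton A⁰ w * I⁻¹ ≤ I * I⁻¹ :=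
            mul_left_mono (a := I⁻¹) hsw
        _ = 1 := mul_inv_cancel₀ hI
    obtain ⟨𝔫, h𝔫⟩ := FractionalIdeal.le_one_iff_exists_coeIdeal.mp hle
    have hprod : (𝔫 : FractionalIdeal A⁰ K) * I = FractionalIdeal.spanSingleton A⁰ w := by
      rw [h𝔫, mul_assoc, mul_comm I⁻¹ I, mul_inv_cancel₀ hI, mul_one]
    have h𝔫0 : 𝔫 ≠ 0 := by
      intro h
      rw [h] at hprod
      simp only [Ideal.zero_eq_bot, FractionalIdeal.coeIdeal_eq_zero.mpr rfl,
        zero_mul] at hprod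
      exact hw0 (FractionalIdeal.spanSingleton_eq_zero_iff.mp hprod.symm)
    have h𝔫top : 𝔫 = ⊤ := by
      by_contra htop
      apply hx 𝔫 h𝔫0 htop
      rw [hprod]
      by_cases hx0 : x = 0
      · rw [hx0]; exact zero_mem ((FractionalIdeal.spanSingleton A⁰ w : FractionalIdeal A⁰ K) : Submodule A K)
      · rw [hxw hx0]; exact FractionalIdeal.mem_spanSingleton_self A⁰ x
    refine ⟨w, ?_⟩
    have : (𝔫 : FractionalIdeal A⁰ K) = 1 := by rw [h𝔫top]; simp
    rw [this, one_mul] at hprod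
    exact hprod
  · rintro ⟨y, rfl⟩
    have hy0 : y ≠ 0 := by
      intro h
      exact hI (by rw [h, FractionalIdeal.spanSingleton_zero])
    refine ⟨y, FractionalIdeal.mem_spanSingleton_self A⁰ y, fun 𝔫 h0 htop hmem => ?_⟩
    have hle : FractionalIdeal.spanSingleton A⁰ y ≤
        (𝔫 : FractionalIdeal A⁰ K) * FractionalIdeal.spanSingleton A⁰ y :=
      (FractionalIdeal.spanSingleton_le_iff_mem).mpr hmem
    have h1 : (1 : FractionalIdeal A⁰ K) ≤ (𝔫 : FractionalIdeal A⁰ K) := by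
      have := mul_left_mono (a := (FractionalIdeal.spanSingleton A⁰ y)⁻¹) hle
      simp only at this
      rwa [mul_assoc, mul_inv_cancel₀ (FractionalIdeal.spanSingleton_ne_zero_iff.mpr hy0),
        mul_one] at this
    apply htop
    have h2 : (⊤ : Ideal A) ≤ 𝔫 := by
      rw [← FractionalIdeal.coeIdeal_le_coeIdeal K, FractionalIdeal.coeIdeal_top]
      exact h1
    exact top_le_iff.mp h2
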